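/- Let f ∈ C¹[a,b] and g ∈ C¹[a,b] with g' > 0, and suppose f' > 0 on a subinterval [p,q]. Then there exist c, d ∈ (p,q) such that ∫ₚ^q f(t) dg(t) − (g(q) − g(p)) f(p) = g'(c) · f'(d) · (q − p)²/2. -/

import Mathlib

open Set intervalIntegral MeasureTheory

/-- Mean value form of the local lower Riemann–Stieltjes error when `f' > 0` on `[p,q]`. -/
theorem local_error_mean_value
    (a b : ℝ) (hab : a < b) (f g f' g' : ℝ → ℝ)
    (hf : ∀ t ∈ Set.Icc a b, HasDerivWithinAt f (f' t) (Set.Icc a b) t)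
    (hf' : ContinuousOn f' (Set.Icc a b))
    (hg : ∀ t ∈ Set.Icc a b, HasDerivWithinAt g (g' t) (Set.Icc a b) t)
    (hg' : ContinuousOn g' (Set.Icc a b))
    (hgpos : ∀ t ∈ Set.Icc a b, 0 < g' t)
    (p q : ℝ) (hap : a ≤ p) (hpq : p < q) (hqb : q ≤ b)
    (hfpos : ∀ t ∈ Set.Icc p q, 0 < f' t) :
    ∃ c ∈ Set.Ioo p q, ∃ d ∈ Set.Ioo p q,
      (∫ t in p..q, f t * g' t) - (g q - g p) * f p =
        g' c * f' d * (q - p) ^ 2 / 2 := by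
  have hsub : Set.Icc p q ⊆ Set.Icc a b := Set.Icc_subset_Icc hap hqb
  have hfc : ContinuousOn f (Set.Icc a b) := fun t ht =>
    (hf t ht).continuousWithinAt
  have hgc : ContinuousOn g (Set.Icc a b) := fun t ht =>
    (hg t ht).continuousWithinAt
  have hFg' : ContinuousOn (fun t => f t * g' t) (Set.Icc a b) := hfc.mul hg'
  -- interior derivatives
  have hmem : ∀ x ∈ Set.Ioo p q, Set.Icc a b ∈ nhds x := by
    intro x hx
    exact Icc_mem_nhds (lt_of_le_of_lt hap hx.1) (lt_of_lt_of_le hx.2 hqb)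
  have hint : IntervalIntegrable (fun t => f t * g' t) volume p q :=
    (hFg'.mono (by rw [Set.uIcc_of_le hpq.le]; exact hsub)).intervalIntegrable
  set E : ℝ → ℝ := fun x => (∫ t in p..x, f t * g' t) - (g x - g p) * f p with hE
  have hEc : ContinuousOn E (Set.Icc p q) := by
    apply ContinuousOn.sub
    · have := intervalIntegral.continuousOn_primitive_interval
        (f := fun t => f t * g' t) (μ := volume) (a := p) (b := q)
        ((hFg'.mono (by rw [Set.uIcc_of_le hpq.le]; exact hsub)).integrableOn_compact
          (by rw [Set.uIcc_of_le hpq.le]; exact isCompact_Icc))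
      rwa [Set.uIcc_of_le hpq.le] at this
    · exact (((hgc.mono hsub).sub continuousOn_const).mul continuousOn_const)
  have hE' : ∀ x ∈ Set.Ioo p q, HasDerivAt E ((f x - f p) * g' x) x := by
    intro x hx
    have hxab : x ∈ Set.Icc a b := hsub (Set.mem_Icc_of_Ioo hx)
    have hca : ContinuousAt (fun t => f t * g' t) x :=
      (hFg'.continuousAt (hmem x hx))
    have h1 : HasDerivAt (fun u => ∫ t in p..u, f t * g' t) (f x * g' x) x := by
      apply intervalIntegral.integral_hasDerivAt_right
      · exact (hFg'.mono (by
          rw [Set.uIcc_of_le (le_of_lt hx.1)]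
          exact (Set.Icc_subset_Icc le_rfl hx.2.le).trans hsub)).intervalIntegrable
      · exact ContinuousAt.stronglyMeasurableAtFilter (μ := volume) isOpen_Ioo
          (fun y hy => hFg'.continuousAt (Icc_mem_nhds hy.1 hy.2)) x
          ⟨lt_of_le_of_lt hap hx.1, lt_of_lt_of_le hx.2 hqb⟩
      · exact hca
    have h2 : HasDerivAt (fun u => (g u - g p) * f p) (g' x * f p) x := by
      have hgx : HasDerivAt g (g' x) x := (hg x hxab).hasDerivAt (hmem x hx)
      simpa using ((hgx.sub_const (g p)).mul_const (f p))
    have : HasDerivAt E (f x * g' x - g' x * f p) x := h1.sub h2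
    convert this using 1
    ring
  -- Cauchy mean value theorem with G x = (x-p)^2/2
  obtain ⟨c, hc, hcval⟩ :=
    exists_ratio_hasDerivAt_eq_ratio_slope E (fun x => (f x - f p) * g' x) hpq hEc hE'
      (fun x => (x - p) ^ 2 / 2) (fun x => x - p)
      (by fun_prop)
      (fun x _ => by
        have : HasDerivAt (fun x : ℝ => (x - p) ^ 2 / 2) (2 * (x - p) ^ 1 * 1 / 2) x := by
          exact (((hasDerivAt_id x).sub_const p).pow 2).div_const 2
        simpa using this)
  -- Lagrange MVT for f on [p, c]
  have hcq : c < q := hc.2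
  have hpc : p < c := hc.1
  have hfc' : ContinuousOn f (Set.Icc p c) :=
    hfc.mono ((Set.Icc_subset_Icc le_rfl hcq.le).trans hsub)
  have hfd : ∀ x ∈ Set.Ioo p c, HasDerivAt f (f' x) x := by
    intro x hx
    have hx' : x ∈ Set.Ioo p q := ⟨hx.1, lt_trans hx.2 hcq⟩
    exact (hf x (hsub (Set.mem_Icc_of_Ioo hx'))).hasDerivAt (hmem x hx')
  obtain ⟨d, hd, hdval⟩ := exists_hasDerivAt_eq_slope f f' hpc hfc' hfd
  refine ⟨c, hc, d, ⟨hd.1, lt_trans hd.2 hcq⟩, ?_⟩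
  have hEq : E q - E p = (∫ t in p..q, f t * g' t) - (g q - g p) * f p := by
    simp [hE]
  have hcp : c - p ≠ 0 := sub_ne_zero.2 hpc.ne'
  have hfc0 : f c - f p = f' d * (c - p) := by
    field_simp at hdval
    linarith [hdval]
  rw [← hEq]
  have hG : ((q - p) ^ 2 / 2 - (p - p) ^ 2 / 2) = (q - p) ^ 2 / 2 := by ring
  rw [hG] at hcval
  have : (q - p) ^ 2 / 2 * (f' d * (c - p) * g' c) = (E q - E p) * (c - p) := by
    rw [← hfc0]; exact hcval
  have h2 : ((q - p) ^ 2 / 2 * (f' d * g' c)) * (c - p) = (E q - E p) * (c - p) := by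
    rw [← this]; ring
  have := mul_right_cancel₀ hcp h2
  linarith [this]
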